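/- Let β > 0, M₁ ≥ 0, M₂ ≥ 0, t₀ ∈ ℝ, and let e : ℝ → ℝ³ be differentiable with e(t₀) = 0 and ⟨e(t), e'(t)⟩ ≤ M₁·e^{−β(t−t₀)} + M₂ for all t ≥ t₀. Then for all t ≥ t₀: ‖e(t)‖² ≤ (2M₁/β)·(1 − e^{−β(t−t₀)}) + 2M₂·(t − t₀). -/

import Mathlib

open scoped RealInnerProductSpace

theorem accumulated_error_integrated_bound (β M₁ M₂ t₀ : ℝ)
    (hβ : 0 < β) (hM₁ : 0 ≤ M₁) (hM₂ : 0 ≤ M₂)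
    (e : ℝ → EuclideanSpace ℝ (Fin 3)) (he : Differentiable ℝ e)
    (he₀ : e t₀ = 0)
    (hinner : ∀ t ≥ t₀, ⟪e t, deriv e t⟫ ≤ M₁ * Real.exp (-β * (t - t₀)) + M₂) :
    ∀ t ≥ t₀,
      ‖e t‖ ^ 2 ≤ 2 * M₁ / β * (1 - Real.exp (-β * (t - t₀))) + 2 * M₂ * (t - t₀) := by
  intro t ht
  set h : ℝ → ℝ := fun s =>
    2 * M₁ / β * (1 - Real.exp (-β * (s - t₀))) + 2 * M₂ * (s - t₀) - ‖e s‖ ^ 2 with hh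
  have hf : ∀ s : ℝ, HasDerivAt (fun u => ‖e u‖ ^ 2) (2 * ⟪e s, deriv e s⟫) s := by
    intro s
    have h1 : HasDerivAt (fun u => ⟪e u, e u⟫) (⟪e s, deriv e s⟫ + ⟪deriv e s, e s⟫) s :=
      (he s).hasDerivAt.inner ℝ (he s).hasDerivAt
    have h2 : (fun u => ⟪e u, e u⟫) = fun u => ‖e u‖ ^ 2 := by
      funext u; exact real_inner_self_eq_norm_sq (e u)
    rw [h2] at h1
    convert h1 using 1
    rw [real_inner_comm (deriv e s) (e s)]; ring
  have hg : ∀ s : ℝ, HasDerivAt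
      (fun u => 2 * M₁ / β * (1 - Real.exp (-β * (u - t₀))) + 2 * M₂ * (u - t₀))
      (2 * M₁ * Real.exp (-β * (s - t₀)) + 2 * M₂) s := by
    intro s
    have h1 : HasDerivAt (fun u : ℝ => -β * (u - t₀)) (-β) s := by
      simpa using ((hasDerivAt_id s).sub_const t₀).const_mul (-β)
    have h2 : HasDerivAt (fun u : ℝ => Real.exp (-β * (u - t₀)))
        (Real.exp (-β * (s - t₀)) * (-β)) s := HasDerivAt.exp h1
    have h3 : HasDerivAt (fun u : ℝ => 2 * M₁ / β * (1 - Real.exp (-β * (u - t₀))))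
        (2 * M₁ / β * (0 - Real.exp (-β * (s - t₀)) * (-β))) s :=
      ((hasDerivAt_const s (1 : ℝ)).sub h2).const_mul _
    have h4 : HasDerivAt (fun u : ℝ => 2 * M₂ * (u - t₀)) (2 * M₂ * 1) s :=
      ((hasDerivAt_id s).sub_const t₀).const_mul _
    refine (h3.add h4).congr_deriv ?_
    field_simp
    ring
  have hhd : ∀ s : ℝ, HasDerivAt h
      (2 * M₁ * Real.exp (-β * (s - t₀)) + 2 * M₂ - 2 * ⟪e s, deriv e s⟫) s :=
    fun s => (hg s).sub (hf s)
  have hmono : MonotoneOn h (Set.Ici t₀) := by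
    apply monotoneOn_of_deriv_nonneg (convex_Ici t₀)
    · exact Continuous.continuousOn (continuous_iff_continuousAt.2
        fun s => (hhd s).continuousAt)
    · intro x hx
      exact ((hhd x).differentiableAt).differentiableWithinAt
    · intro x hx
      rw [interior_Ici] at hx
      rw [(hhd x).deriv]
      have := hinner x (le_of_lt hx)
      nlinarith
  have h0 : h t₀ = 0 := by
    simp [hh, he₀]
  have hle := hmono (Set.mem_Ici.2 le_rfl) ht ht
  rw [h0] at hle
  simp only [hh] at hle
  linarith
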